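/- Let H₀ and K be complex Hilbert spaces, T₀ ∈ B(H₀), V ∈ B(K) an isometry (‖Vk‖ = ‖k‖ for all k ∈ K), and A ∈ B(K, H₀). Let R be the block operator on H₀ ⊕₂ K defined by R(x, k) = (T₀x + Ak, Vk). Assume that there is a nonzero polynomial p with complex coefficients, all of whose roots lie in the open unit disc, such that p(T₀) = 0, and that R is polynomially bounded. Then R is similar to a contraction. -/

import Mathlib

noncomputable section

/-- An operator `T` is polynomially bounded if `‖p(T)‖ ≤ M · sup_{|z| ≤ 1} |p(z)|`
for some `M > 0` and all polynomials `p`. -/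
def PolynomiallyBounded {H : Type*} [NormedAddCommGroup H] [NormedSpace ℂ H] (T : H →L[ℂ] H) : Prop :=
  ∃ M : ℝ, 0 < M ∧ ∀ p : Polynomial ℂ,
    ‖Polynomial.aeval T p‖ ≤ M * sSup ((fun z : ℂ => ‖p.eval z‖) '' {z : ℂ | ‖z‖ ≤ 1})

/-- An operator `T` is similar to a contraction if `‖X T X⁻¹‖ ≤ 1` for some continuous linear
equivalence `X`. -/
def SimilarToContraction {H : Type*} [NormedAddCommGroup H] [NormedSpace ℂ H] (T : H →L[ℂ] H) : Prop :=
  ∃ X : H ≃L[ℂ] H, ‖((X : H →L[ℂ] H).comp T).comp (X.symm : H →L[ℂ] H)‖ ≤ 1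

open Filter ContinuousLinearMap
open scoped ENNReal NNReal ComplexConjugate

set_option maxHeartbeats 1000000 in
lemma aux_decay {H : Type} [NormedAddCommGroup H] [InnerProductSpace ℂ H] [CompleteSpace H]
    (T : H →L[ℂ] H) (p : Polynomial ℂ) (hp : p ≠ 0)
    (hroots : ∀ z : ℂ, p.eval z = 0 → ‖z‖ < 1)
    (hpT : Polynomial.aeval T p = 0) :
    ∃ C r : ℝ, 0 < C ∧ 0 ≤ r ∧ r < 1 ∧ ∀ n : ℕ, ‖T ^ n‖ ≤ C * r ^ n := by
  rcases subsingleton_or_nontrivial H with hH | hH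
  · refine ⟨1, 1/2, one_pos, by norm_num, by norm_num, fun n => ?_⟩
    have h0 : (T ^ n) = 0 := Subsingleton.elim _ _
    rw [h0, norm_zero]
    positivity
  · have hnt : Nontrivial (H →L[ℂ] H) := by
      refine ⟨1, 0, fun h => ?_⟩
      obtain ⟨x, hx⟩ := exists_ne (0:H)
      exact hx (by simpa using DFunLike.congr_fun h x)
    have hspec : ∀ z ∈ spectrum ℂ T, ‖z‖₊ < 1 := by
      intro z hz
      have h1 : p.eval z ∈ spectrum ℂ (Polynomial.aeval T p) :=
        spectrum.subset_polynomial_aeval T p ⟨z, hz, rfl⟩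
      rw [hpT, spectrum.zero_eq] at h1
      have h2 := hroots z (by simpa using h1)
      rw [← NNReal.coe_lt_coe]
      simpa [coe_nnnorm] using h2
    have hrad : spectralRadius ℂ T < (1 : NNReal) :=
      spectrum.spectralRadius_lt_of_forall_lt_of_nonempty (spectrum.nonempty T) hspec
    obtain ⟨ρ, hρ1, hρ2⟩ := ENNReal.lt_iff_exists_nnreal_btwn.mp hrad
    have hρpos : 0 < ρ := by
      rcases eq_or_lt_of_le (zero_le : (0:NNReal) ≤ ρ) with h | h
      · exfalso; rw [← h] at hρ1; simp at hρ1
      · exact h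
    have hρlt1 : (ρ : ℝ) < 1 := by exact_mod_cast hρ2
    have hgel := spectrum.pow_nnnorm_pow_one_div_tendsto_nhds_spectralRadius T
    obtain ⟨N, hN⟩ := Filter.eventually_atTop.mp (hgel.eventually_lt_const hρ1)
    have hbound : ∀ n, N ≤ n → 1 ≤ n → ‖T ^ n‖₊ ≤ ρ ^ n := by
      intro n h1 h2
      have h3 := (hN n h1).le
      have h4 : ((‖T ^ n‖₊ : ℝ≥0∞) ^ (1/(n:ℝ))) ^ (n:ℝ) ≤ (ρ : ℝ≥0∞) ^ (n:ℝ) :=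
        ENNReal.rpow_le_rpow h3 (Nat.cast_nonneg n)
      have hn0 : (n:ℝ) ≠ 0 := by positivity
      rw [← ENNReal.rpow_mul, one_div, inv_mul_cancel₀ hn0, ENNReal.rpow_one,
        ENNReal.rpow_natCast, ← ENNReal.coe_pow, ENNReal.coe_le_coe] at h4
      exact h4
    set ρ' : ℝ := (ρ : ℝ) with hρ'
    have hρ'pos : 0 < ρ' := hρpos
    refine ⟨1 + ∑ k ∈ Finset.range (N+2), ‖T ^ k‖ / ρ' ^ k, ρ', ?_, le_of_lt hρ'pos, hρlt1, ?_⟩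
    · have : 0 ≤ ∑ k ∈ Finset.range (N+2), ‖T ^ k‖ / ρ' ^ k :=
        Finset.sum_nonneg fun k _ => by positivity
      linarith
    · intro n
      set C := 1 + ∑ k ∈ Finset.range (N+2), ‖T ^ k‖ / ρ' ^ k with hC
      have hsum_nonneg : 0 ≤ ∑ k ∈ Finset.range (N+2), ‖T ^ k‖ / ρ' ^ k :=
        Finset.sum_nonneg fun k _ => by positivity
      by_cases hn : n < N + 2
      · have hterm : ‖T ^ n‖ / ρ' ^ n ≤ ∑ k ∈ Finset.range (N+2), ‖T ^ k‖ / ρ' ^ k :=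
          Finset.single_le_sum (f := fun k => ‖T ^ k‖ / ρ' ^ k) (fun k _ => by positivity) (Finset.mem_range.mpr hn)
        have hpow : (0:ℝ) < ρ' ^ n := by positivity
        calc ‖T ^ n‖ = (‖T ^ n‖ / ρ' ^ n) * ρ' ^ n := by field_simp
          _ ≤ C * ρ' ^ n := by
              apply mul_le_mul_of_nonneg_right _ (le_of_lt hpow)
              calc ‖T ^ n‖ / ρ' ^ n ≤ _ := hterm
                _ ≤ C := by rw [hC]; linarith
      · push_neg at hn
        have h1 : N ≤ n := by omega
        have h2 : 1 ≤ n := by omega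
        have h3 : ‖T ^ n‖ ≤ ρ' ^ n := by
          have := hbound n h1 h2
          calc ‖T ^ n‖ = ((‖T ^ n‖₊ : ℝ)) := by rw [coe_nnnorm]
            _ ≤ ((ρ ^ n : NNReal) : ℝ) := by exact_mod_cast this
            _ = ρ' ^ n := by push_cast; ring
        calc ‖T ^ n‖ ≤ ρ' ^ n := h3
          _ ≤ C * ρ' ^ n := by
              apply le_mul_of_one_le_left (by positivity)
              rw [hC]; linarith

lemma aux_sylvester {H₀ K : Type}
    [NormedAddCommGroup H₀] [InnerProductSpace ℂ H₀] [CompleteSpace H₀]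
    [NormedAddCommGroup K] [InnerProductSpace ℂ K] [CompleteSpace K]
    (T₀ : H₀ →L[ℂ] H₀) (V : K →L[ℂ] K) (A : K →L[ℂ] H₀)
    (hVV : adjoint V ∘L V = 1) (hVadj : ‖adjoint V‖ ≤ 1)
    (C r : ℝ) (hC : 0 < C) (hr0 : 0 ≤ r) (hr1 : r < 1)
    (hTn : ∀ n : ℕ, ‖T₀ ^ n‖ ≤ C * r ^ n) :
    ∃ Y : K →L[ℂ] H₀, Y ∘L V - T₀ ∘L Y = A := by
  set W := adjoint V with hW
  set f : ℕ → (K →L[ℂ] H₀) := fun n => ((T₀ ^ n) ∘L A) ∘L (W ^ (n+1)) with hf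
  set g : ℕ → (K →L[ℂ] H₀) := fun n => ((T₀ ^ n) ∘L A) ∘L (W ^ n) with hg
  have hWpow : ∀ m : ℕ, ‖W ^ m‖ ≤ 1 := by
    intro m
    induction m with
    | zero => rw [pow_zero, ContinuousLinearMap.one_def]; exact norm_id_le
    | succ k ih =>
        rw [pow_succ, ContinuousLinearMap.mul_def]
        exact (opNorm_comp_le _ _).trans (mul_le_one₀ ih (norm_nonneg _) hVadj)
  have hbnd : ∀ (m : ℕ) (n : ℕ), ‖((T₀ ^ n) ∘L A) ∘L (W ^ m)‖ ≤ (C * ‖A‖) * r ^ n := by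
    intro m n
    calc ‖((T₀ ^ n) ∘L A) ∘L (W ^ m)‖ ≤ ‖(T₀ ^ n) ∘L A‖ * ‖W ^ m‖ := opNorm_comp_le _ _
      _ ≤ ‖(T₀ ^ n) ∘L A‖ * 1 := by
          exact mul_le_mul_of_nonneg_left (hWpow m) (norm_nonneg _)
      _ = ‖(T₀ ^ n) ∘L A‖ := mul_one _
      _ ≤ ‖T₀ ^ n‖ * ‖A‖ := opNorm_comp_le _ _
      _ ≤ (C * r ^ n) * ‖A‖ := mul_le_mul_of_nonneg_right (hTn n) (norm_nonneg _)
      _ = (C * ‖A‖) * r ^ n := by ring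
  have hgeo : Summable (fun n : ℕ => (C * ‖A‖) * r ^ n) :=
    (summable_geometric_of_lt_one hr0 hr1).mul_left _
  have hfs : Summable f := Summable.of_norm_bounded hgeo (fun n => hbnd (n+1) n)
  have hgs : Summable g := Summable.of_norm_bounded hgeo (fun n => hbnd n n)
  have hTfs : Summable (fun n => T₀ ∘L f n) :=
    hfs.mapL (ContinuousLinearMap.compL ℂ K H₀ H₀ T₀)
  refine ⟨∑' n, f n, ?_⟩
  have h1 : (∑' n, f n) ∘L V = ∑' n, (f n ∘L V) := by
    exact ((ContinuousLinearMap.compL ℂ K K H₀).flip V).map_tsum hfs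
  have h2 : ∀ n, f n ∘L V = g n := by
    intro n
    rw [hf, hg]
    simp only
    rw [comp_assoc]
    congr 1
    rw [pow_succ, ContinuousLinearMap.mul_def, comp_assoc, hVV, ContinuousLinearMap.one_def, comp_id]
  have h3 : ∀ n, g (n+1) = T₀ ∘L f n := by
    intro n
    rw [hf, hg]
    simp only
    rw [pow_succ', ContinuousLinearMap.mul_def]
    simp only [comp_assoc]
  have h4 : T₀ ∘L (∑' n, f n) = ∑' n, T₀ ∘L f n :=
    (ContinuousLinearMap.compL ℂ K H₀ H₀ T₀).map_tsum hfs
  rw [h1]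
  have h5 : ∑' n, (f n ∘L V) = ∑' n, g n := by exact tsum_congr h2
  rw [h5, Summable.tsum_eq_zero_add hgs]
  have hg0 : g 0 = A := by rw [hg]; simp [ContinuousLinearMap.one_def]
  rw [hg0, h4]
  rw [tsum_congr h3]
  abel

set_option maxHeartbeats 2000000 in
set_option synthInstance.maxHeartbeats 1000000 in
lemma aux_renorm {H₀ : Type}
    [NormedAddCommGroup H₀] [InnerProductSpace ℂ H₀] [CompleteSpace H₀]
    (T₀ : H₀ →L[ℂ] H₀)
    (C r : ℝ) (hr0 : 0 ≤ r) (hr1 : r < 1)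
    (hTn : ∀ n : ℕ, ‖T₀ ^ n‖ ≤ C * r ^ n) :
    ∃ SE : H₀ ≃L[ℂ] H₀, ∀ x : H₀, ‖SE (T₀ (SE.symm x))‖ ≤ ‖x‖ := by
  set h : ℕ → (H₀ →L[ℂ] H₀) := fun n => star (T₀ ^ n) * (T₀ ^ n) with hh
  have hC0 : 0 ≤ C := by
    have := (norm_nonneg (T₀ ^ 0)).trans (hTn 0)
    simpa using this
  have hgeo : Summable (fun n : ℕ => (C * C) * (r * r) ^ n) :=
    (summable_geometric_of_lt_one (by positivity) (by nlinarith)).mul_left _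
  have hbnd : ∀ n, ‖h n‖ ≤ (C * C) * (r * r) ^ n := by
    intro n
    calc ‖h n‖ ≤ ‖star (T₀ ^ n)‖ * ‖T₀ ^ n‖ := norm_mul_le _ _
      _ = ‖T₀ ^ n‖ * ‖T₀ ^ n‖ := by rw [norm_star]
      _ ≤ (C * r ^ n) * (C * r ^ n) := by
          have := hTn n
          have h0 := norm_nonneg (T₀ ^ n)
          nlinarith
      _ = (C * C) * (r * r) ^ n := by rw [mul_pow]; ring
  have hs : Summable h := Summable.of_norm_bounded hgeo hbnd
  set P : H₀ →L[ℂ] H₀ := ∑' n, h n with hP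
  have happ : ∀ x : H₀, P x = ∑' n, (h n) x := fun x =>
    (ContinuousLinearMap.apply ℂ H₀ x).map_tsum hs
  have hsapp : ∀ x : H₀, Summable (fun n => (h n) x) := fun x =>
    hs.mapL (ContinuousLinearMap.apply ℂ H₀ x)
  have hsq : ∀ x : H₀, Summable (fun n => ‖(T₀ ^ n) x‖ ^ 2) := by
    intro x
    refine Summable.of_nonneg_of_le (fun n => by positivity) (fun n => ?_)
      (hgeo.mul_right (‖x‖ ^2))
    have h4 : (0:ℝ) ≤ C * r ^ n := by positivity
    calc ‖(T₀ ^ n) x‖ ^ 2 ≤ (‖T₀ ^ n‖ * ‖x‖) ^ 2 :=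
          pow_le_pow_left₀ (norm_nonneg _) ((T₀ ^ n).le_opNorm x) 2
      _ ≤ ((C * r ^ n) * ‖x‖) ^ 2 :=
          pow_le_pow_left₀ (by positivity)
            (mul_le_mul_of_nonneg_right (hTn n) (norm_nonneg x)) 2
      _ = (C * C) * (r * r) ^ n * ‖x‖ ^ 2 := by rw [mul_pow, mul_pow, mul_pow]; ring
  have hterm : ∀ (x : H₀) (n : ℕ), (inner ℂ x ((h n) x)) = (‖(T₀ ^ n) x‖ : ℂ) ^ 2 := by
    intro x n
    rw [hh]
    simp only [ContinuousLinearMap.mul_apply, star_eq_adjoint, adjoint_inner_right]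
    exact inner_self_eq_norm_sq_to_K (𝕜 := ℂ) ((T₀ ^ n) x)
  have hinner : ∀ x : H₀, (inner ℂ x (P x)) = ∑' n, (‖(T₀ ^ n) x‖ : ℂ) ^ 2 := by
    intro x
    rw [happ x, ← innerSL_apply_apply (𝕜 := ℂ), (innerSL ℂ x).map_tsum (hsapp x)]
    simp only [innerSL_apply_apply]
    exact tsum_congr (hterm x)
  have hinner_re : ∀ x : H₀, RCLike.re (inner (𝕜 := ℂ) x (P x)) = ∑' n, ‖(T₀ ^ n) x‖ ^ 2 := by
    intro x
    have hsc : Summable (fun n => ((‖(T₀ ^ n) x‖ : ℂ)) ^ 2) := by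
      have := (hsq x).mapL Complex.ofRealCLM
      simpa [Complex.ofReal_pow] using this
    rw [hinner x, RCLike.re_tsum _ hsc]
    exact tsum_congr fun n => by rw [← Complex.ofReal_pow]; exact RCLike.ofReal_re _
  -- P is selfadjoint
  have hPsa : IsSelfAdjoint P := by
    rw [hP, IsSelfAdjoint, tsum_star]
    exact tsum_congr (fun n => by rw [hh]; simp [star_mul, star_star, mul_assoc])
  -- 1 ≤ P
  have hone_le : (1 : H₀ →L[ℂ] H₀) ≤ P := by
    rw [ContinuousLinearMap.le_def]
    constructor
    · exact ContinuousLinearMap.isSelfAdjoint_iff_isSymmetric.mp (hPsa.sub (IsSelfAdjoint.one _))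
    · intro x
      have : (P - 1) x = P x - x := by simp
      rw [reApplyInnerSelf, this]
      have e1 : RCLike.re (inner (𝕜 := ℂ) (P x - x) x) = RCLike.re (inner (𝕜 := ℂ) x (P x - x)) :=
        inner_re_symm _ _
      rw [e1, inner_sub_right, map_sub]
      have e2 : RCLike.re (inner (𝕜 := ℂ) x x) = ‖x‖ ^ 2 := by
        rw [← norm_sq_eq_re_inner]
      rw [hinner_re x, e2]
      have e3 : ‖x‖ ^ 2 ≤ ∑' n, ‖(T₀ ^ n) x‖ ^ 2 := by
        have := Summable.le_tsum (hsq x) 0 (fun m _ => by positivity)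
        simpa using this
      linarith
  have hzero_le_one : (0 : H₀ →L[ℂ] H₀) ≤ 1 :=
    (ContinuousLinearMap.nonneg_iff_isPositive _).mpr isPositive_one
  have hP0 : 0 ≤ P := hzero_le_one.trans hone_le
  have hPunit : IsUnit P := CStarAlgebra.isUnit_of_le 1 hone_le
  set S : H₀ →L[ℂ] H₀ := CFC.sqrt P with hSdef
  have hS0 : 0 ≤ S := CFC.sqrt_nonneg P
  have hSS : S * S = P := CFC.sqrt_mul_sqrt_self P hP0
  have hSsa : IsSelfAdjoint S :=
    ((ContinuousLinearMap.nonneg_iff_isPositive _).mp hS0).isSelfAdjoint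
  -- S is a unit
  have hSunit : IsUnit S := by
    obtain ⟨u, hu⟩ := hPunit
    have hb : S * (S * ↑u⁻¹) = 1 := by
      rw [← mul_assoc, hSS, ← hu, Units.mul_inv]
    have hc : (↑u⁻¹ * S) * S = 1 := by
      rw [mul_assoc, hSS, ← hu, Units.inv_mul]
    have hbc : (S * ↑u⁻¹ : H₀ →L[ℂ] H₀) = ↑u⁻¹ * S := by
      calc (S * ↑u⁻¹ : H₀ →L[ℂ] H₀) = 1 * (S * ↑u⁻¹) := (one_mul _).symm
        _ = ((↑u⁻¹ * S) * S) * (S * ↑u⁻¹) := by rw [hc]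
        _ = (↑u⁻¹ * S) * (S * (S * ↑u⁻¹)) := by
              rw [mul_assoc (↑u⁻¹ * S) S (S * ↑u⁻¹)]
        _ = (↑u⁻¹ * S) * 1 := by rw [hb]
        _ = ↑u⁻¹ * S := mul_one _
    exact ⟨⟨S, S * ↑u⁻¹, hb, by rw [hbc]; exact hc⟩, rfl⟩
  set SE : H₀ ≃L[ℂ] H₀ := ContinuousLinearEquiv.unitsEquiv ℂ H₀ hSunit.unit with hSE
  have hSEcoe : ∀ x, SE x = S x := fun x => rfl
  -- norm identity : ‖S w‖^2 = ∑' n, ‖T₀^n w‖^2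
  have hSnorm : ∀ w : H₀, ‖S w‖ ^ 2 = ∑' n, ‖(T₀ ^ n) w‖ ^ 2 := by
    intro w
    have e1 : inner ℂ (S w) (S w) = inner ℂ w (P w) := by
      rw [← adjoint_inner_right, hSsa.adjoint_eq, ← ContinuousLinearMap.mul_apply, hSS]
    have := congrArg RCLike.re e1
    rw [← norm_sq_eq_re_inner] at this
    rw [this, hinner_re]
  -- contraction property
  have hkey : ∀ u : H₀, ‖S (T₀ u)‖ ≤ ‖S u‖ := by
    intro u
    have e1 : ‖S (T₀ u)‖ ^ 2 = ∑' n, ‖(T₀ ^ (n+1)) u‖ ^ 2 := by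
      rw [hSnorm]
      refine tsum_congr fun n => ?_
      rw [show ((T₀ ^ (n+1)) u) = (T₀ ^ n) (T₀ u) from by rw [pow_succ, ContinuousLinearMap.mul_apply]]
    have e2 : ∑' n, ‖(T₀ ^ (n+1)) u‖ ^ 2 ≤ ‖S u‖ ^ 2 := by
      rw [hSnorm u, Summable.tsum_eq_zero_add (hsq u)]
      have : (0:ℝ) ≤ ‖(T₀ ^ 0) u‖ ^ 2 := by positivity
      linarith
    have e3 : ‖S (T₀ u)‖ ^ 2 ≤ ‖S u‖ ^ 2 := by rw [e1]; exact e2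
    have h5 := Real.sqrt_le_sqrt e3
    rwa [Real.sqrt_sq (norm_nonneg _), Real.sqrt_sq (norm_nonneg _)] at h5
  refine ⟨SE, fun x => ?_⟩
  have e4 : ‖SE (T₀ (SE.symm x))‖ = ‖S (T₀ (SE.symm x))‖ := by rw [hSEcoe]
  have e5 : S (SE.symm x) = x := by
    rw [← hSEcoe]
    exact SE.apply_symm_apply x
  rw [e4]
  calc ‖S (T₀ (SE.symm x))‖ ≤ ‖S (SE.symm x)‖ := hkey _
    _ = ‖x‖ := by rw [e5]

/-- Theorem 2.3 in the case where the annihilating inner function is a finite Blaschke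
product: if `p(T₀) = 0` for a nonzero polynomial `p` with all roots in the open unit disc,
`V` is an isometry, and the block operator `R(x,k) = (T₀x + Ak, Vk)` is polynomially
bounded, then `R` is similar to a contraction. -/
theorem similarToContraction_of_isometric_corner
    {H₀ K : Type}
    [NormedAddCommGroup H₀] [InnerProductSpace ℂ H₀] [CompleteSpace H₀]
    [NormedAddCommGroup K] [InnerProductSpace ℂ K] [CompleteSpace K]
    (T₀ : H₀ →L[ℂ] H₀) (V : K →L[ℂ] K) (hViso : ∀ k : K, ‖V k‖ = ‖k‖)
    (A : K →L[ℂ] H₀)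
    (R : WithLp 2 (H₀ × K) →L[ℂ] WithLp 2 (H₀ × K))
    (hR : ∀ (x : H₀) (k : K),
      R ((WithLp.equiv 2 (H₀ × K)).symm (x, k))
        = (WithLp.equiv 2 (H₀ × K)).symm (T₀ x + A k, V k))
    (p : Polynomial ℂ) (hp : p ≠ 0)
    (hroots : ∀ z : ℂ, p.eval z = 0 → ‖z‖ < 1)
    (hpT₀ : Polynomial.aeval T₀ p = 0)
    (hRpb : PolynomiallyBounded R) :
    SimilarToContraction R := by
  classical
  obtain ⟨C, r, hC, hr0, hr1, hTn⟩ := aux_decay T₀ p hp hroots hpT₀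
  have hVV : ContinuousLinearMap.adjoint V ∘L V = 1 :=
    (ContinuousLinearMap.norm_map_iff_adjoint_comp_self V).mp hViso
  have hVle : ‖V‖ ≤ 1 :=
    ContinuousLinearMap.opNorm_le_bound _ zero_le_one (fun k => by rw [hViso, one_mul])
  have hVadj : ‖ContinuousLinearMap.adjoint V‖ ≤ 1 := by
    rw [LinearIsometryEquiv.norm_map ContinuousLinearMap.adjoint V]
    exact hVle
  obtain ⟨Y, hY⟩ := aux_sylvester T₀ V A hVV hVadj C r hC hr0 hr1 hTn
  obtain ⟨SE, hSE⟩ := aux_renorm T₀ C r hr0 hr1 hTn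
  clear hRpb hpT₀ hroots hp hVV hVadj hVle hTn hC hr0 hr1
  set E := WithLp 2 (H₀ × K)
  set eq2 := WithLp.equiv 2 (H₀ × K) with heq2
  set eL : E ≃L[ℂ] (H₀ × K) := WithLp.prodContinuousLinearEquiv 2 ℂ H₀ K with heL
  set Y' : K →L[ℂ] H₀ := -Y with hY'
  set M1 : (H₀ × K) →L[ℂ] (H₀ × K) :=
    ((fst ℂ H₀ K) + Y' ∘L (snd ℂ H₀ K)).prod (snd ℂ H₀ K) with hM1
  set M2 : (H₀ × K) →L[ℂ] (H₀ × K) :=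
    ((fst ℂ H₀ K) - Y' ∘L (snd ℂ H₀ K)).prod (snd ℂ H₀ K) with hM2
  set D1 : (H₀ × K) →L[ℂ] (H₀ × K) :=
    ((SE : H₀ →L[ℂ] H₀) ∘L (fst ℂ H₀ K)).prod (snd ℂ H₀ K) with hD1
  set D2 : (H₀ × K) →L[ℂ] (H₀ × K) :=
    ((SE.symm : H₀ →L[ℂ] H₀) ∘L (fst ℂ H₀ K)).prod (snd ℂ H₀ K) with hD2
  set Xf : E →L[ℂ] E :=
    ((eL.symm : (H₀ × K) →L[ℂ] E) ∘L (D1 ∘L M1)) ∘L (eL : E →L[ℂ] (H₀ × K)) with hXf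
  set Xg : E →L[ℂ] E :=
    ((eL.symm : (H₀ × K) →L[ℂ] E) ∘L (M2 ∘L D2)) ∘L (eL : E →L[ℂ] (H₀ × K)) with hXg
  have hXf_apply : ∀ w : H₀ × K, Xf (eq2.symm w) = eq2.symm (SE (w.1 + Y' w.2), w.2) :=
    fun w => rfl
  have hXg_apply : ∀ w : H₀ × K, Xg (eq2.symm w) = eq2.symm (SE.symm w.1 - Y' w.2, w.2) :=
    fun w => rfl
  have hfg : Function.LeftInverse Xg Xf := by
    intro v
    have h1 : Xf v = eq2.symm (SE ((eL v).1 + Y' (eL v).2), (eL v).2) := rfl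
    rw [h1, hXg_apply]
    simp only [ContinuousLinearEquiv.symm_apply_apply, add_sub_cancel_right]
    rfl
  have hgf : Function.RightInverse Xg Xf := by
    intro v
    have h1 : Xg v = eq2.symm (SE.symm ((eL v).1) - Y' (eL v).2, (eL v).2) := rfl
    rw [h1, hXf_apply]
    simp only [sub_add_cancel, ContinuousLinearEquiv.apply_symm_apply]
    rfl
  set X : E ≃L[ℂ] E := ContinuousLinearEquiv.equivOfInverse Xf Xg hfg hgf with hX
  refine ⟨X, opNorm_le_bound _ zero_le_one fun v => ?_⟩
  rw [one_mul]
  have hcoe : (X : E →L[ℂ] E) = Xf := rfl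
  have hcoes : (X.symm : E →L[ℂ] E) = Xg := rfl
  rw [comp_apply, comp_apply, hcoe, hcoes]
  set x : H₀ := (eL v).1 with hx
  set k : K := (eL v).2 with hk
  have hv : v = eq2.symm (x, k) := rfl
  have step1 : Xg v = eq2.symm (SE.symm x - Y' k, k) := by
    rw [hv, hXg_apply]
  have step2 : R (Xg v) = eq2.symm (T₀ (SE.symm x - Y' k) + A k, V k) := by
    rw [step1, heq2, hR]
  have hzero : SE ((T₀ (SE.symm x - Y' k) + A k) + Y' (V k)) = SE (T₀ (SE.symm x)) := by
    congr 1
    have h1 : A k = Y (V k) - T₀ (Y k) := by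
      rw [← hY]; simp only [ContinuousLinearMap.sub_apply, comp_apply]
    rw [h1, hY', map_sub]
    simp only [ContinuousLinearMap.neg_apply, map_neg]
    abel
  have step3 : Xf (R (Xg v)) = eq2.symm (SE (T₀ (SE.symm x)), V k) := by
    rw [step2, hXf_apply]
    simp only
    rw [hzero]
  rw [step3]
  -- now the norm estimate
  have hnorm1 : ‖(eq2.symm (SE (T₀ (SE.symm x)), V k) : E)‖ ^ 2
      = ‖SE (T₀ (SE.symm x))‖ ^ 2 + ‖V k‖ ^ 2 := by
    rw [WithLp.prod_norm_sq_eq_of_L2]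
    rfl
  have hnorm2 : ‖v‖ ^ 2 = ‖x‖ ^ 2 + ‖k‖ ^ 2 := by
    rw [WithLp.prod_norm_sq_eq_of_L2]
    rfl
  have hle : ‖(eq2.symm (SE (T₀ (SE.symm x)), V k) : E)‖ ^ 2 ≤ ‖v‖ ^ 2 := by
    rw [hnorm1, hnorm2, hViso k]
    have := hSE x
    have h2 : ‖SE (T₀ (SE.symm x))‖ ^ 2 ≤ ‖x‖ ^ 2 :=
      pow_le_pow_left₀ (norm_nonneg _) this 2
    linarith
  have h5 := Real.sqrt_le_sqrt hle
  rwa [Real.sqrt_sq (norm_nonneg _), Real.sqrt_sq (norm_nonneg _)] at h5
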